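/- Let L and M be positive definite Hermitian matrices in M_2(O) for O an imaginary quadratic order, and suppose P ∈ M_2(O) satisfies M P = P' L, where P' sends [[a,b],[c,d]] to [[d̄,-c̄],[-b̄,ā]]. Then P* M P = (conj(det P)) L, and det P is a non-negative rational integer. -/

import Mathlib

open scoped ComplexOrder

/-- The involution `P ↦ P'` on `M₂(K)`: `[[a,b],[c,d]] ↦ [[d̄,-c̄],[-b̄,ā]]`. -/
def pprime {K : Type*} [Field K] (σ : K → K) (P : Matrix (Fin 2) (Fin 2) K) :
    Matrix (Fin 2) (Fin 2) K :=
  !![σ (P 1 1), -(σ (P 1 0)); -(σ (P 0 1)), σ (P 0 0)]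

/-- Conjugate transpose of a `2×2` matrix with respect to the conjugation `σ`. -/
def cstar {K : Type*} [Field K] (σ : K → K) (P : Matrix (Fin 2) (Fin 2) K) :
    Matrix (Fin 2) (Fin 2) K :=
  !![σ (P 0 0), σ (P 1 0); σ (P 0 1), σ (P 1 1)]

open Matrix

/- STATEMENT 13.  Let `O` be an imaginary quadratic order (here: the ring of integers of
an imaginary quadratic field `K` with conjugation `σ`), and let `L, M` be positive
definite Hermitian matrices in `M₂(O)` (positive definiteness is read off via a complex
embedding `φ` compatible with `σ`).  If `P ∈ M₂(O)` satisfies `M P = P' L`, then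
`P* M P = σ(det P) · L` and `det P` is a non-negative rational integer. -/
theorem stmt13 (K : Type*) [Field K] [NumberField K]
    (hdeg : Module.finrank ℚ K = 2) (himag : IsEmpty (K →+* ℝ))
    (σ : K ≃ₐ[ℚ] K) (hσ : ∀ x, σ (σ x) = x) (hσne : σ ≠ (AlgEquiv.refl : K ≃ₐ[ℚ] K))
    (φ : K →+* ℂ) (hφσ : ∀ x, φ (σ x) = starRingEnd ℂ (φ x))
    (L M P : Matrix (Fin 2) (Fin 2) K)
    (hLint : ∀ i j, IsIntegral ℤ (L i j)) (hMint : ∀ i j, IsIntegral ℤ (M i j))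
    (hPint : ∀ i j, IsIntegral ℤ (P i j))
    (hLherm : cstar (⇑σ) L = L) (hMherm : cstar (⇑σ) M = M)
    (hLpd : (L.map ⇑φ).PosDef) (hMpd : (M.map ⇑φ).PosDef)
    (h : M * P = pprime (⇑σ) P * L) :
    cstar (⇑σ) P * M * P = σ P.det • L ∧ ∃ n : ℕ, P.det = (n : K) := by
  -- Key algebraic identity: P* · P' = σ(det P) • 1
  have hkey : cstar (⇑σ) P * pprime (⇑σ) P = σ P.det • (1 : Matrix (Fin 2) (Fin 2) K) := by
    ext i j
    fin_cases i <;> fin_cases j <;>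
      simp [cstar, pprime, Matrix.mul_apply, Fin.sum_univ_two, Matrix.det_fin_two,
        Matrix.one_apply, _root_.map_mul, map_sub] <;> ring
  have h1 : cstar (⇑σ) P * M * P = σ P.det • L := by
    rw [Matrix.mul_assoc, h, ← Matrix.mul_assoc, hkey, Matrix.smul_mul, Matrix.one_mul]
  refine ⟨h1, ?_⟩
  -- Map everything to ℂ
  have hcstar : (cstar (⇑σ) P).map ⇑φ = (P.map ⇑φ)ᴴ := by
    ext i j
    fin_cases i <;> fin_cases j <;>
      simp [cstar, Matrix.map_apply, Matrix.conjTranspose_apply, hφσ]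
  have hsmulmap : (σ P.det • L).map ⇑φ = φ (σ P.det) • L.map ⇑φ := by
    ext i j; simp [Matrix.map_apply, Matrix.smul_apply, _root_.map_mul, smul_eq_mul]
  have h2 : (P.map ⇑φ)ᴴ * M.map ⇑φ * P.map ⇑φ = φ (σ P.det) • L.map ⇑φ := by
    have := congrArg (Matrix.map · ⇑φ) h1
    simp only [Matrix.map_mul, hcstar, hsmulmap] at this
    exact this
  have hps : ((P.map ⇑φ)ᴴ * M.map ⇑φ * P.map ⇑φ).PosSemidef :=
    hMpd.posSemidef.conjTranspose_mul_mul_same _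
  set c : ℂ := φ (σ P.det) with hc
  set v : Fin 2 → ℂ := ![1, 0] with hv
  have hvne : v ≠ 0 := by
    intro hh
    have := congrFun hh 0
    simp [hv] at this
  have hr : 0 < star v ⬝ᵥ (L.map ⇑φ *ᵥ v) := hLpd.dotProduct_mulVec_pos hvne
  have hcr : 0 ≤ c * (star v ⬝ᵥ (L.map ⇑φ *ᵥ v)) := by
    have := hps.dotProduct_mulVec_nonneg v
    rwa [h2, Matrix.smul_mulVec, dotProduct_smul, smul_eq_mul] at this
  set r : ℂ := star v ⬝ᵥ (L.map ⇑φ *ᵥ v) with hrdef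
  rw [Complex.lt_def] at hr
  rw [Complex.nonneg_iff] at hcr
  simp only [Complex.mul_re, Complex.mul_im, Complex.zero_re, Complex.zero_im] at hr hcr
  have hrim : r.im = 0 := hr.2.symm
  have hcim : c.im = 0 := by
    rcases hcr with ⟨_, h2'⟩
    rw [hrim] at h2'
    rcases mul_eq_zero.mp (by linarith : c.im * r.re = 0) with h' | h'
    · exact h'
    · nlinarith [hr.1]
  have hcre : 0 ≤ c.re := by
    rcases hcr with ⟨h1', _⟩
    rw [hrim] at h1'
    nlinarith [hr.1]
  -- c is real, so σ (det P) = det P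
  have him : (φ P.det).im = 0 := by
    have := hcim
    rw [hc, hφσ] at this
    simpa using this
  have hfix : σ P.det = P.det := by
    apply φ.injective
    rw [hφσ]
    exact Complex.conj_eq_iff_im.mpr him
  have h4 : c = φ P.det := by
    rw [hc, hφσ]
    exact Complex.conj_eq_iff_im.mpr him
  -- σ-fixed elements are rational
  have hratmem : P.det ∈ (Submodule.span ℚ ({1} : Set K)) := by
    set f : K →ₗ[ℚ] K := σ.toLinearMap - LinearMap.id with hf
    have hker1 : Submodule.span ℚ ({1} : Set K) ≤ LinearMap.ker f := by
      rw [Submodule.span_le]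
      rintro x rfl
      simp [hf]
    have hfne : f ≠ 0 := by
      intro h0
      apply hσne
      ext x
      have hx := LinearMap.ext_iff.mp h0 x
      simpa [hf, sub_eq_zero] using hx
    have hrange : LinearMap.range f ≠ ⊥ := by
      rwa [ne_eq, LinearMap.range_eq_bot]
    have hrankpos : 0 < Module.finrank ℚ (LinearMap.range f) :=
      Nat.pos_of_ne_zero (fun h0 => hrange (Submodule.finrank_eq_zero.mp h0))
    have hrn := LinearMap.finrank_range_add_finrank_ker f
    rw [hdeg] at hrn
    have hkerle : Module.finrank ℚ (LinearMap.ker f) ≤ 1 := by omega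
    have hspan1 : Module.finrank ℚ (Submodule.span ℚ ({1} : Set K)) = 1 :=
      finrank_span_singleton one_ne_zero
    have heq : Submodule.span ℚ ({1} : Set K) = LinearMap.ker f :=
      Submodule.eq_of_le_of_finrank_le hker1 (by rw [hspan1]; exact hkerle)
    rw [heq]
    exact LinearMap.mem_ker.mpr (by simp [hf, sub_eq_zero, hfix])
  obtain ⟨q, hq⟩ := Submodule.mem_span_singleton.mp hratmem
  have hqcast : P.det = (q : K) := by
    rw [← hq, Rat.smul_one_eq_cast]
  -- det P is an algebraic integer
  have hdint : IsIntegral ℤ P.det := by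
    rw [Matrix.det_fin_two]
    exact ((hPint 0 0).mul (hPint 1 1)).sub ((hPint 0 1).mul (hPint 1 0))
  have hqint : IsIntegral ℤ q := by
    have : IsIntegral ℤ (algebraMap ℚ K q) := by
      rwa [hqcast, show ((q : K)) = algebraMap ℚ K q from (eq_ratCast (algebraMap ℚ K) q).symm]
        at hdint
    exact (isIntegral_algebraMap_iff (algebraMap ℚ K).injective).mp this
  obtain ⟨m, hm⟩ := IsIntegrallyClosed.isIntegral_iff.mp hqint
  have hmq : (m : ℚ) = q := hm
  -- nonnegativity of q
  have hφdet : φ P.det = (q : ℂ) := by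
    rw [hqcast, map_ratCast]
  have hq0 : 0 ≤ q := by
    have : 0 ≤ (q : ℂ).re := by rw [← hφdet, ← h4]; exact hcre
    simpa using this
  have hm0 : 0 ≤ m := by
    rw [← hmq] at hq0
    exact_mod_cast hq0
  refine ⟨m.toNat, ?_⟩
  rw [hqcast, ← hmq]
  exact_mod_cast (Int.toNat_of_nonneg hm0).symm
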